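/- Suppose series a_{0i}(u) for all i ∈ ℤ≥0 satisfy a_{0,i+n}(u)·a_{0,n}(u)^{-1} = a_{0i}(u + κ) for a fixed shift parameter κ and the recursions h_i(u) = a_{0i}(u+(i-1)/2)^{-1} a_{0i}(u+(i+1)/2)^{-1} a_{0,i-1}(u+(i-1)/2) a_{0,i+1}(u+(i+1)/2). Then a_{01} satisfies the functional equation a_{01}(u-n)·∏_{j=1}^n h_j(u-n+(j-1)/2) = a_{01}(u+κ), and when κ ≠ -n this equation uniquely determines a_{01}(u) given the h_j(u) (among series of the fixed form). -/

import Mathlib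

open PowerSeries

/-- The shift `u ↦ u + c` acting on the normalized part `g(u^{-1})` of a series in `u^{-1}`:
in the variable `X = u^{-1}` it is the substitution `X ↦ X/(1+cX)`, given on coefficients by
`(S_c g)_k = ∑_{m≤k} g_m (-c)^{k-m} C(k-1, k-m)`. -/
noncomputable def shiftPS {F : Type*} [Field F] (c : F) (g : PowerSeries F) : PowerSeries F :=
  PowerSeries.mk fun k => ∑ m ∈ Finset.range (k + 1),
    (PowerSeries.coeff (R := F) m g) * (-c) ^ (k - m) * (Nat.choose (k - 1) (k - m) : F)

section Aux
open Finset
variable {F : Type*} [Field F]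

lemma oneAdd_ne (c : F) : (1 + C (R := F) c * X : PowerSeries F) ≠ 0 := by
  intro hc
  have := congrArg (constantCoeff (R := F)) hc
  simp at this

noncomputable def sC (c : F) : PowerSeries F := X * (1 + C (R := F) c * X)⁻¹

lemma sC_mul (c : F) : sC c * (1 + C (R := F) c * X) = X := by
  rw [sC, mul_assoc, PowerSeries.inv_mul_cancel _ (by simp), mul_one]

lemma sC_pow_mul (c : F) (m : ℕ) : sC c ^ m * (1 + C (R := F) c * X) ^ m = X ^ m := by
  rw [← mul_pow, sC_mul]

lemma rescale_one_sub (c : F) : rescale (-c) (1 - X : PowerSeries F) = 1 + C (R := F) c * X := by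
  rw [map_sub, map_one, rescale_X]; ring_nf; rw [map_neg]; ring

lemma sC_pow_eq (c : F) (m : ℕ) :
    sC c ^ m = X ^ m * rescale (-c) ((invOneSubPow F m).val) := by
  have hne : ((1 + C (R := F) c * X : PowerSeries F) ^ m) ≠ 0 := pow_ne_zero _ (oneAdd_ne c)
  apply mul_right_cancel₀ hne
  rw [sC_pow_mul, mul_assoc, ← rescale_one_sub, ← map_pow, ← map_mul]
  rw [show ((invOneSubPow F m).val * (1-X)^m : PowerSeries F) = 1 by
    have := (invOneSubPow F m).val_inv
    rwa [invOneSubPow_inv_eq_one_sub_pow] at this]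
  simp

lemma coeff_sC_pow_of_lt (c : F) {m k : ℕ} (h : k < m) :
    coeff (R := F) k (sC c ^ m) = 0 := by
  rw [sC_pow_eq, PowerSeries.coeff_mul]
  apply Finset.sum_eq_zero
  rintro ⟨i, j⟩ hij
  rw [Finset.HasAntidiagonal.mem_antidiagonal] at hij
  rw [PowerSeries.coeff_X_pow]
  have : i ≠ m := by omega
  simp [this]

lemma coeff_sC_pow (c : F) {m k : ℕ} (h : m ≤ k) :
    coeff (R := F) k (sC c ^ m) = (-c) ^ (k - m) * (Nat.choose (k - 1) (k - m) : F) := by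
  rcases Nat.eq_zero_or_pos m with hm | hm
  · subst hm
    rcases Nat.eq_zero_or_pos k with hk | hk
    · subst hk; simp
    · rw [pow_zero, PowerSeries.coeff_one]
      rw [Nat.choose_eq_zero_of_lt (by omega)]
      simp [hk.ne']
  · rw [sC_pow_eq]
    rw [show k = (k - m) + m by omega, PowerSeries.coeff_X_pow_mul,
      coeff_rescale, invOneSubPow_val_eq_mk_sub_one_add_choose_of_pos F m hm, coeff_mk]
    rw [show (k - m) + m - m = k - m by omega, show m - 1 + (k - m) = k - 1 by omega,
      show (k - m) + m - 1 = k - 1 by omega]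
    congr 1
    norm_cast
    rw [show k - m = (k-1) - (m-1) by omega, Nat.choose_symm (by omega)]

lemma coeff_shiftPS (c : F) (g : PowerSeries F) (k : ℕ) :
    coeff (R := F) k (shiftPS c g) = ∑ m ∈ range (k + 1), coeff (R := F) m g * coeff (R := F) k (sC c ^ m) := by
  rw [shiftPS, coeff_mk]
  refine Finset.sum_congr rfl fun m hm => ?_
  have hmk : m ≤ k := Nat.lt_succ_iff.mp (Finset.mem_range.mp hm)
  rw [coeff_sC_pow c hmk, mul_assoc]

lemma coeff_shiftPS' (c : F) (g : PowerSeries F) {k N : ℕ} (h : k < N) :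
    coeff (R := F) k (shiftPS c g) = ∑ m ∈ range N, coeff (R := F) m g * coeff (R := F) k (sC c ^ m) := by
  rw [coeff_shiftPS]
  apply Finset.sum_subset (by intro x hx; simp at hx ⊢; omega)
  intro x hx hnx
  simp only [Finset.mem_range] at hx hnx
  rw [coeff_sC_pow_of_lt c (by omega), mul_zero]

lemma coeff_shiftPS_aeval (c : F) (P : Polynomial F) {k N : ℕ} (h : k < N) :
    coeff (R := F) k (Polynomial.aeval (sC c) P) = ∑ m ∈ range N, P.coeff m * coeff (R := F) k (sC c ^ m) := by
  rw [Polynomial.aeval_eq_sum_range' (n := max N (P.natDegree + 1))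
    (lt_of_lt_of_le (Nat.lt_succ_self _) (le_max_right _ _)), map_sum]
  have : ∀ i, coeff (R := F) k (P.coeff i • sC c ^ i) = P.coeff i * coeff (R := F) k (sC c ^ i) := by
    intro i; rw [PowerSeries.coeff_smul, smul_eq_mul]
  simp_rw [this]
  symm
  apply Finset.sum_subset (by intro x hx; simp at hx ⊢; omega)
  intro x hx hnx
  simp only [Finset.mem_range] at hx hnx
  rw [coeff_sC_pow_of_lt c (by omega), mul_zero]

lemma coeff_shiftPS_trunc (c : F) (g : PowerSeries F) {k N : ℕ} (h : k < N) :
    coeff (R := F) k (shiftPS c g) = coeff (R := F) k (Polynomial.aeval (sC c) (trunc N g)) := by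
  rw [coeff_shiftPS' c g h, coeff_shiftPS_aeval c _ h]
  refine Finset.sum_congr rfl fun m hm => ?_
  rw [coeff_trunc]
  simp only [Finset.mem_range] at hm
  rw [if_pos hm]

lemma shiftPS_mul (c : F) (g h : PowerSeries F) :
    shiftPS c (g * h) = shiftPS c g * shiftPS c h := by
  ext k
  have hk : k < k + 1 := Nat.lt_succ_self _
  rw [PowerSeries.coeff_mul]
  have h1 : ∀ p ∈ Finset.HasAntidiagonal.antidiagonal k,
      coeff (R := F) p.1 (shiftPS c g) * coeff (R := F) p.2 (shiftPS c h)
      = coeff (R := F) p.1 (Polynomial.aeval (sC c) (trunc (k+1) g))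
        * coeff (R := F) p.2 (Polynomial.aeval (sC c) (trunc (k+1) h)) := by
    rintro ⟨i, j⟩ hij
    rw [Finset.HasAntidiagonal.mem_antidiagonal] at hij
    rw [coeff_shiftPS_trunc c g (by omega : i < k + 1),
      coeff_shiftPS_trunc c h (by omega : j < k + 1)]
  rw [Finset.sum_congr rfl h1, ← PowerSeries.coeff_mul, ← map_mul,
    coeff_shiftPS_trunc c (g * h) hk,
    coeff_shiftPS_aeval c _ (show k < 2 * (k + 1) by omega),
    coeff_shiftPS_aeval c _ (show k < 2 * (k + 1) by omega)]
  refine Finset.sum_congr rfl fun m _ => ?_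
  by_cases hm : m ≤ k
  · congr 1
    rw [coeff_trunc, if_pos (by omega), Polynomial.coeff_mul, PowerSeries.coeff_mul]
    refine Finset.sum_congr rfl fun p hp => ?_
    rw [Finset.HasAntidiagonal.mem_antidiagonal] at hp
    rw [coeff_trunc, coeff_trunc, if_pos (by omega), if_pos (by omega)]
  · rw [coeff_sC_pow_of_lt c (by omega), mul_zero, mul_zero]

lemma shiftPS_add (c : F) (g h : PowerSeries F) :
    shiftPS c (g + h) = shiftPS c g + shiftPS c h := by
  ext k
  simp [shiftPS, coeff_mk, ← Finset.sum_add_distrib, add_mul]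

lemma shiftPS_smul (c : F) (a : F) (g : PowerSeries F) :
    shiftPS c (a • g) = a • shiftPS c g := by
  ext k
  simp [shiftPS, coeff_mk, Finset.mul_sum, mul_assoc]

lemma shiftPS_one (c : F) : shiftPS c (1 : PowerSeries F) = 1 := by
  ext k
  rw [coeff_shiftPS]
  rw [Finset.sum_eq_single 0]
  · simp
  · intro b _ hb
    rw [PowerSeries.coeff_one, if_neg hb]; ring
  · simp

lemma shiftPS_zero (c : F) : shiftPS c (0 : PowerSeries F) = 0 := by
  ext k; simp [shiftPS, coeff_mk]

/-- `shiftPS c` as a ring homomorphism. -/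
noncomputable def shiftHom (c : F) : PowerSeries F →+* PowerSeries F where
  toFun := shiftPS c
  map_one' := shiftPS_one c
  map_mul' := shiftPS_mul c
  map_zero' := shiftPS_zero c
  map_add' := shiftPS_add c

lemma shiftHom_apply (c : F) (g : PowerSeries F) : shiftHom c g = shiftPS c g := rfl

lemma constantCoeff_shiftPS (c : F) (g : PowerSeries F) :
    constantCoeff (R := F) (shiftPS c g) = constantCoeff (R := F) g := by
  rw [← coeff_zero_eq_constantCoeff, shiftPS, coeff_mk]
  simp

lemma shiftPS_X (c : F) : shiftPS c (X : PowerSeries F) = sC c := by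
  ext k
  rw [coeff_shiftPS]
  rcases Nat.eq_zero_or_pos k with hk | hk
  · subst hk
    rw [Finset.range_one, Finset.sum_singleton]
    simp [sC]
  · rw [Finset.sum_eq_single 1]
    · simp
    · intro b _ hb
      rw [PowerSeries.coeff_X, if_neg hb]; ring
    · intro hc; simp at hc; omega

lemma shiftPS_C (c a : F) : shiftPS c (C (R := F) a) = C (R := F) a := by
  have : (C (R := F) a : PowerSeries F) = a • 1 := by
    rw [smul_eq_C_mul, mul_one]
  rw [this, shiftPS_smul, shiftPS_one]

lemma shiftPS_oneAdd (c d : F) :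
    shiftPS d (1 + C (R := F) c * X) = 1 + C (R := F) c * sC d := by
  rw [shiftPS_add, shiftPS_one, shiftPS_mul, shiftPS_C, shiftPS_X]

lemma oneAdd_mul_sC (c d : F) :
    (1 + C (R := F) c * sC d) * (1 + C (R := F) d * X) = 1 + C (R := F) (c + d) * X := by
  have h := sC_mul (F := F) d
  calc (1 + C (R := F) c * sC d) * (1 + C (R := F) d * X)
      = (1 + C (R := F) d * X) + C (R := F) c * (sC d * (1 + C (R := F) d * X)) := by ring
    _ = (1 + C (R := F) d * X) + C (R := F) c * X := by rw [h]
    _ = 1 + C (R := F) (c + d) * X := by rw [map_add]; ring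

lemma shiftPS_oneAdd_mul (c d : F) :
    shiftPS d (1 + C (R := F) c * X) * (1 + C (R := F) d * X) = 1 + C (R := F) (c + d) * X := by
  rw [shiftPS_oneAdd, oneAdd_mul_sC]

lemma shiftPS_sC (c d : F) : shiftPS d (sC c) = sC (c + d) := by
  apply mul_right_cancel₀ (oneAdd_ne (c + d))
  rw [sC_mul]
  have h1 : shiftPS d (sC c) * (1 + C (R := F) c * sC d) = sC d := by
    rw [← shiftPS_oneAdd, ← shiftPS_mul, sC_mul, shiftPS_X]
  calc shiftPS d (sC c) * (1 + C (R := F) (c + d) * X)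
      = shiftPS d (sC c) * ((1 + C (R := F) c * sC d) * (1 + C (R := F) d * X)) := by rw [oneAdd_mul_sC]
    _ = (shiftPS d (sC c) * (1 + C (R := F) c * sC d)) * (1 + C (R := F) d * X) := by ring
    _ = sC d * (1 + C (R := F) d * X) := by rw [h1]
    _ = X := sC_mul d

lemma shiftPS_shiftPS (c d : F) (g : PowerSeries F) :
    shiftPS d (shiftPS c g) = shiftPS (c + d) g := by
  ext k
  have hk : k < k + 1 := Nat.lt_succ_self _
  -- replace the inner shiftPS by the truncated polynomial evaluation
  have congrlem : ∀ (e : F) (f f' : PowerSeries F),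
      (∀ i, i ≤ k → coeff (R := F) i f = coeff (R := F) i f') →
      coeff (R := F) k (shiftPS e f) = coeff (R := F) k (shiftPS e f') := by
    intro e f f' hf
    rw [coeff_shiftPS, coeff_shiftPS]
    refine Finset.sum_congr rfl fun m hm => ?_
    rw [hf m (Nat.lt_succ_iff.mp (Finset.mem_range.mp hm))]
  set P := trunc (k + 1) g with hP
  have key : shiftPS d (Polynomial.aeval (sC c) P) = Polynomial.aeval (sC (c + d)) P := by
    rw [Polynomial.aeval_eq_sum_range, Polynomial.aeval_eq_sum_range]
    rw [show shiftPS d (∑ i ∈ range (P.natDegree + 1), P.coeff i • sC c ^ i)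
        = shiftHom d (∑ i ∈ range (P.natDegree + 1), P.coeff i • sC c ^ i) from rfl, map_sum]
    refine Finset.sum_congr rfl fun i _ => ?_
    rw [shiftHom_apply, shiftPS_smul]
    congr 1
    rw [show shiftPS d (sC c ^ i) = shiftHom d (sC c ^ i) from rfl, map_pow,
      shiftHom_apply, shiftPS_sC]
  calc coeff (R := F) k (shiftPS d (shiftPS c g))
      = coeff (R := F) k (shiftPS d (Polynomial.aeval (sC c) P)) :=
        congrlem d _ _ (fun i hi => coeff_shiftPS_trunc c g (by omega))
    _ = coeff (R := F) k (Polynomial.aeval (sC (c + d)) P) := by rw [key]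
    _ = coeff (R := F) k (shiftPS (c + d) g) := (coeff_shiftPS_trunc (c + d) g hk).symm

lemma shiftPS_zero_c (g : PowerSeries F) : shiftPS (0 : F) g = g := by
  ext k
  rw [shiftPS, coeff_mk]
  rw [Finset.sum_eq_single k]
  · simp
  · intro b hb hbk
    have : k - b ≠ 0 := by simp at hb; omega
    rw [neg_zero, zero_pow this]; ring
  · intro hk; simp at hk

lemma shiftPS_sub (c : F) (g h : PowerSeries F) :
    shiftPS c (g - h) = shiftPS c g - shiftPS c h :=
  map_sub (shiftHom c) g h

/-- The normalized shifted series `a_{0i}(u+e)/u^i`. -/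
noncomputable def Qs (g : ℕ → PowerSeries F) (i : ℕ) (e : F) : PowerSeries F :=
  (1 + C (R := F) e * X) ^ i * shiftPS e (g i)

lemma Qs_ne (g : ℕ → PowerSeries F) (i : ℕ) (e : F)
    (hg : constantCoeff (R := F) (g i) = 1) : Qs g i e ≠ 0 := by
  intro hc
  have := congrArg (constantCoeff (R := F)) hc
  rw [Qs] at this
  simp [constantCoeff_shiftPS, hg] at this

lemma star_lemma (g h : ℕ → PowerSeries F) (i : ℕ) (hi : 1 ≤ i) (d : F)
    (Hrec : h i * ((1 + C (R := F) (((i:F) - 1)/2) * X) ^ i * shiftPS (((i:F) - 1)/2) (g i))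
          * ((1 + C (R := F) (((i:F) + 1)/2) * X) ^ i * shiftPS (((i:F) + 1)/2) (g i))
        = ((1 + C (R := F) (((i:F) - 1)/2) * X) ^ (i - 1) * shiftPS (((i:F) - 1)/2) (g (i - 1)))
          * ((1 + C (R := F) (((i:F) + 1)/2) * X) ^ (i + 1) * shiftPS (((i:F) + 1)/2) (g (i + 1)))) :
    shiftPS d (h i) * Qs g i (((i:F) - 1)/2 + d) * Qs g i (((i:F) + 1)/2 + d)
      = Qs g (i - 1) (((i:F) - 1)/2 + d) * Qs g (i + 1) (((i:F) + 1)/2 + d) := by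
  obtain ⟨j, rfl⟩ : ∃ j, i = j + 1 := ⟨i - 1, by omega⟩
  set c1 : F := ((((j:ℕ)+1:ℕ):F) - 1)/2 with hc1
  set c2 : F := ((((j:ℕ)+1:ℕ):F) + 1)/2 with hc2
  have H := congrArg (shiftHom d) Hrec
  simp only [map_mul, map_pow, shiftHom_apply, shiftPS_shiftPS] at H
  simp only [Qs, Nat.add_sub_cancel] at *
  have e : ∀ (c : F) (m : ℕ), ((1 : PowerSeries F) + C (R := F) (c + d) * X) ^ m
      = (shiftPS d (1 + C (R := F) c * X)) ^ m * (1 + C (R := F) d * X) ^ m := fun c m => by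
    rw [← mul_pow, shiftPS_oneAdd_mul]
  rw [e c1 (j+1), e c2 (j+1), e c1 j, e c2 (j+2)]
  linear_combination ((1 + C (R := F) d * X) ^ (2*j+2)) * H

lemma telescope [CharZero F] (n : ℕ) (g h : ℕ → PowerSeries F)
    (hgconst : ∀ i, constantCoeff (R := F) (g i) = 1)
    (hg0 : g 0 = 1)
    (hrec : ∀ i : ℕ, 1 ≤ i →
      h i * ((1 + C (R := F) (((i:F) - 1)/2) * X) ^ i * shiftPS (((i:F) - 1)/2) (g i))
          * ((1 + C (R := F) (((i:F) + 1)/2) * X) ^ i * shiftPS (((i:F) + 1)/2) (g i))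
        = ((1 + C (R := F) (((i:F) - 1)/2) * X) ^ (i - 1) * shiftPS (((i:F) - 1)/2) (g (i - 1)))
          * ((1 + C (R := F) (((i:F) + 1)/2) * X) ^ (i + 1) * shiftPS (((i:F) + 1)/2) (g (i + 1))))
    (t : ℕ) :
    (∏ j ∈ Finset.Icc 1 t, shiftPS (((j:F) - 1)/2 - n) (h j)) * Qs g 1 (-(n:F))
        * Qs g t ((t:F) - n)
      = Qs g (t + 1) ((t:F) - n) := by
  induction t with
  | zero =>
    rw [show Finset.Icc 1 0 = (∅ : Finset ℕ) by decide, Finset.prod_empty, one_mul]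
    rw [show ((0:ℕ):F) - n = -(n:F) by push_cast; ring]
    rw [show Qs g 0 (-(n:F)) = 1 by rw [Qs, pow_zero, hg0, shiftPS_one, one_mul], mul_one]
  | succ t ih =>
    rw [Finset.prod_Icc_succ_top (by omega : 1 ≤ t + 1)]
    have hs := star_lemma g h (t+1) (by omega) (((((t+1:ℕ)):F) - 1)/2 - n)
      (hrec (t+1) (by omega))
    have hA : ((((t+1:ℕ)):F) - 1)/2 + (((((t+1:ℕ)):F) - 1)/2 - n) = (t:F) - n := by
      push_cast; field_simp; ring
    have hB : ((((t+1:ℕ)):F) + 1)/2 + (((((t+1:ℕ)):F) - 1)/2 - n) = (((t+1:ℕ)):F) - n := by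
      push_cast; field_simp; ring
    rw [hA, hB, Nat.add_sub_cancel] at hs
    apply mul_right_cancel₀ (mul_ne_zero (Qs_ne g t ((t:F) - n) (hgconst t))
      (Qs_ne g (t+1) ((t:F) - n) (hgconst (t+1))))
    linear_combination (shiftPS (((((t+1:ℕ)):F) - 1)/2 - n) (h (t+1))
        * Qs g (t+1) ((((t+1:ℕ)):F) - n) * Qs g (t+1) ((t:F) - n)) * ih
      + Qs g (t+1) ((t:F) - n) * hs

lemma coeff_shiftPS_low (c : F) (D : PowerSeries F) {K i : ℕ}
    (h0 : ∀ j, j < K → coeff (R := F) j D = 0) (hi : i < K) :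
    coeff (R := F) i (shiftPS c D) = 0 := by
  rw [shiftPS, coeff_mk]
  refine Finset.sum_eq_zero fun m hm => ?_
  rw [h0 m (by simp at hm; omega)]; ring

lemma coeff_shiftPS_diag (c : F) (D : PowerSeries F) {K : ℕ}
    (h0 : ∀ j, j < K → coeff (R := F) j D = 0) :
    coeff (R := F) K (shiftPS c D) = coeff (R := F) K D := by
  rw [shiftPS, coeff_mk, Finset.sum_range_succ]
  rw [Finset.sum_eq_zero fun m hm => by rw [h0 m (by simp at hm; omega)]; ring]
  simp

lemma coeff_shiftPS_succ (c : F) (D : PowerSeries F) {K : ℕ}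
    (h0 : ∀ j, j < K → coeff (R := F) j D = 0) :
    coeff (R := F) (K + 1) (shiftPS c D) = coeff (R := F) (K + 1) D - c * K * coeff (R := F) K D := by
  rw [shiftPS, coeff_mk, Finset.sum_range_succ, Finset.sum_range_succ]
  rw [Finset.sum_eq_zero fun m hm => by rw [h0 m (by simp at hm; omega)]; ring]
  rw [show K + 1 - K = 1 by omega, show K + 1 - (K + 1) = 0 by omega,
    show K + 1 - 1 = K by omega]
  rw [Nat.choose_one_right, Nat.choose_zero_right]
  push_cast
  ring

lemma coeff_one_shiftPS (c : F) (G : PowerSeries F) :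
    coeff (R := F) 1 (shiftPS c G) = coeff (R := F) 1 G := by
  rw [shiftPS, coeff_mk]
  rw [show (1:ℕ) + 1 = 2 by rfl, Finset.sum_range_succ, Finset.sum_range_succ,
    Finset.sum_range_zero]
  simp

end Aux

/-- writing `a_{0i}(u) = u^i g_i(u^{-1})` with `g_i = 1 + O(X)`, suppose the
periodicity `a_{0,i+n}(u) a_{0,n}(u)^{-1} = a_{0i}(u+κ)` and the recursions
`h_i(u) = a_{0i}(u+(i-1)/2)^{-1} a_{0i}(u+(i+1)/2)^{-1} a_{0,i-1}(u+(i-1)/2) a_{0,i+1}(u+(i+1)/2)`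
hold.  Then `a_{01}` satisfies the functional equation
`a_{01}(u-n) ∏_{j=1}^n h_j(u-n+(j-1)/2) = a_{01}(u+κ)`, and when `κ ≠ -n` this equation
uniquely determines `a_{01}` (among series of the fixed form) given the `h_j`. -/
theorem a01_functional_equation_and_uniqueness
    {F : Type*} [Field F] [CharZero F] (n : ℕ) (hn : 0 < n) (κ : F)
    (g h : ℕ → PowerSeries F)
    (hgconst : ∀ i, PowerSeries.constantCoeff (R := F) (g i) = 1)
    (hg0 : g 0 = 1)
    (hper : ∀ i : ℕ, g (i + n) = g n * (1 + C (R := F) κ * X) ^ i * shiftPS κ (g i))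
    (hrec : ∀ i : ℕ, 1 ≤ i →
      h i * ((1 + C (R := F) (((i:F) - 1)/2) * X) ^ i * shiftPS (((i:F) - 1)/2) (g i))
          * ((1 + C (R := F) (((i:F) + 1)/2) * X) ^ i * shiftPS (((i:F) + 1)/2) (g i))
        = ((1 + C (R := F) (((i:F) - 1)/2) * X) ^ (i - 1) * shiftPS (((i:F) - 1)/2) (g (i - 1)))
          * ((1 + C (R := F) (((i:F) + 1)/2) * X) ^ (i + 1) * shiftPS (((i:F) + 1)/2) (g (i + 1)))) :
    let funcEq : PowerSeries F → Prop := fun G =>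
      (1 + C (R := F) (-(n:F)) * X) * shiftPS (-(n:F)) G
          * ∏ j ∈ Finset.Icc 1 n, shiftPS (((j:F) - 1)/2 - n) (h j)
        = (1 + C (R := F) κ * X) * shiftPS κ G;
    funcEq (g 1)
    ∧ (κ ≠ -(n:F) → ∀ G G' : PowerSeries F,
        PowerSeries.constantCoeff (R := F) G = 1 → PowerSeries.constantCoeff (R := F) G' = 1 →
        funcEq G → funcEq G' → G = G') := by
  intro funcEq
  have hgn_ne : g n ≠ 0 := fun hc => by simpa [hc] using hgconst n
  -- the functional equation for `g 1`
  have part1 : funcEq (g 1) := by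
    show (1 + C (R := F) (-(n:F)) * X) * shiftPS (-(n:F)) (g 1)
        * ∏ j ∈ Finset.Icc 1 n, shiftPS (((j:F) - 1)/2 - n) (h j)
      = (1 + C (R := F) κ * X) * shiftPS κ (g 1)
    have T := telescope n g h hgconst hg0 hrec n
    rw [sub_self] at T
    have hQn : Qs g n 0 = g n := by simp [Qs, shiftPS_zero_c]
    have hQn1 : Qs g (n + 1) 0 = g (n + 1) := by simp [Qs, shiftPS_zero_c]
    rw [hQn, hQn1] at T
    have hp := hper 1
    rw [pow_one, add_comm 1 n] at hp
    have hQ1 : Qs g 1 (-(n:F)) = (1 + C (R := F) (-(n:F)) * X) * shiftPS (-(n:F)) (g 1) := by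
      rw [Qs, pow_one]
    apply mul_right_cancel₀ hgn_ne
    rw [← hQ1]
    linear_combination T + hp
  refine ⟨part1, ?_⟩
  intro hκ G G' hG hG' feq feq'
  have feq1 : (1 + C (R := F) (-(n:F)) * X) * shiftPS (-(n:F)) G
      * ∏ j ∈ Finset.Icc 1 n, shiftPS (((j:F) - 1)/2 - n) (h j)
    = (1 + C (R := F) κ * X) * shiftPS κ G := feq
  have feq2 : (1 + C (R := F) (-(n:F)) * X) * shiftPS (-(n:F)) G'
      * ∏ j ∈ Finset.Icc 1 n, shiftPS (((j:F) - 1)/2 - n) (h j)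
    = (1 + C (R := F) κ * X) * shiftPS κ G' := feq'
  -- the product of shifted h's is nonzero
  have hhc : ∀ j, 1 ≤ j → constantCoeff (R := F) (h j) = 1 := by
    intro j hj
    have hcc := congrArg (constantCoeff (R := F)) (hrec j hj)
    simp only [map_mul, map_pow, map_add, map_one, constantCoeff_shiftPS, hgconst,
      constantCoeff_C, constantCoeff_X, mul_zero, add_zero, one_pow, mul_one, one_mul] at hcc
    exact hcc
  have hHne : (∏ j ∈ Finset.Icc 1 n, shiftPS (((j:F) - 1)/2 - n) (h j)) ≠ 0 := by
    intro hc
    have hcc := congrArg (constantCoeff (R := F)) hc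
    rw [map_prod] at hcc
    rw [Finset.prod_eq_one (fun j hj => by
      rw [constantCoeff_shiftPS]; exact hhc j (Finset.mem_Icc.mp hj).1)] at hcc
    simp at hcc
  have hune : (1 + C (R := F) (-(n:F)) * X : PowerSeries F) ≠ 0 := oneAdd_ne _
  have hvne : (1 + C (R := F) κ * X : PowerSeries F) ≠ 0 := oneAdd_ne _
  have ABeq : shiftPS (-(n:F)) G * shiftPS κ G' = shiftPS (-(n:F)) G' * shiftPS κ G := by
    apply mul_right_cancel₀ (mul_ne_zero (mul_ne_zero hune hvne) hHne)
    linear_combination ((1 + C (R := F) κ * X) * shiftPS κ G') * feq1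
      - ((1 + C (R := F) κ * X) * shiftPS κ G) * feq2
  have hκn : κ + (n:F) ≠ 0 := fun hc => hκ (eq_neg_of_add_eq_zero_left hc)
  have main : ∀ K, coeff (R := F) K (G - G') = 0 := by
    intro K
    induction K using Nat.strong_induction_on with
    | _ K ih =>
      rcases Nat.eq_zero_or_pos K with rfl | hK
      · rw [map_sub, coeff_zero_eq_constantCoeff, hG, hG', sub_self]
      · have key : shiftPS (-(n:F)) (G - G') * shiftPS κ G
            = shiftPS κ (G - G') * shiftPS (-(n:F)) G := by
          rw [shiftPS_sub, shiftPS_sub]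
          linear_combination ABeq
        have hcoeff := congrArg (coeff (R := F) ((K - 1) + 1 + 1)) key
        rw [show K - 1 + 1 = K by omega] at hcoeff
        rw [PowerSeries.coeff_mul, PowerSeries.coeff_mul,
          Finset.Nat.sum_antidiagonal_eq_sum_range_succ
            (fun i j => coeff (R := F) i (shiftPS (-(n:F)) (G - G')) * coeff (R := F) j (shiftPS κ G)),
          Finset.Nat.sum_antidiagonal_eq_sum_range_succ
            (fun i j => coeff (R := F) i (shiftPS κ (G - G')) * coeff (R := F) j (shiftPS (-(n:F)) G)),
          Finset.sum_range_succ, Finset.sum_range_succ,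
          Finset.sum_range_succ, Finset.sum_range_succ] at hcoeff
        rw [Finset.sum_eq_zero (fun i hi => by
            rw [coeff_shiftPS_low (-(n:F)) (G - G') ih (by simp at hi; omega), zero_mul]),
          Finset.sum_eq_zero (fun i hi => by
            rw [coeff_shiftPS_low κ (G - G') ih (by simp at hi; omega), zero_mul])] at hcoeff
        rw [show K + 1 - K = 1 by omega, show K + 1 - (K + 1) = 0 by omega] at hcoeff
        rw [coeff_shiftPS_diag (-(n:F)) (G - G') ih, coeff_shiftPS_diag κ (G - G') ih,
          coeff_shiftPS_succ (-(n:F)) (G - G') ih, coeff_shiftPS_succ κ (G - G') ih,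
          coeff_one_shiftPS, coeff_one_shiftPS,
          coeff_zero_eq_constantCoeff_apply, coeff_zero_eq_constantCoeff_apply,
          constantCoeff_shiftPS, constantCoeff_shiftPS, hG] at hcoeff
        have hfin : (κ + (n:F)) * (K:F) * coeff (R := F) K (G - G') = 0 := by
          linear_combination hcoeff
        have hKne : ((K:F)) ≠ 0 := Nat.cast_ne_zero.mpr (by omega)
        exact (mul_eq_zero.mp hfin).resolve_left (mul_ne_zero hκn hKne)
  have : G - G' = 0 := by
    ext K
    rw [main K, map_zero]
  exact sub_eq_zero.mp this
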